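/- Consider the APPNP layer H_{l+1} = (1−β)ÂH_l + βH_0 with 0 < β ≤ 1, Â symmetric with second-largest absolute eigenvalue λ < 1 (eigenvalue-1 eigenspace spanned by Ê). Set v = (1−β)λ and r = β d_M(H_0)/(1−v). Then d_M(H_{l+1}) − r ≤ v (d_M(H_l) − r), and hence d_M(H_l) ≤ r + v^l (d_M(H_0) − r) for all l, so limsup_{l→∞} d_M(H_l) ≤ r. -/

import Mathlib

open Matrix Filter

/-- The Frobenius norm on real `N × C` matrices. -/
noncomputable def frobNorm {N C : ℕ} (H : Matrix (Fin N) (Fin C) ℝ) : ℝ :=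
  Real.sqrt (∑ i, ∑ j, (H i j) ^ 2)

/-- The Frobenius distance from a matrix to a set of matrices. -/
noncomputable def distTo {N C : ℕ} (S : Set (Matrix (Fin N) (Fin C) ℝ))
    (H : Matrix (Fin N) (Fin C) ℝ) : ℝ :=
  sInf ((fun Y => frobNorm (H - Y)) '' S)

open Pointwise

def toE {N C : ℕ} (X : Matrix (Fin N) (Fin C) ℝ) : EuclideanSpace ℝ (Fin N × Fin C) :=
  WithLp.toLp 2 (fun p : Fin N × Fin C => X p.1 p.2)

lemma frobNorm_eq {N C : ℕ} (X : Matrix (Fin N) (Fin C) ℝ) : frobNorm X = ‖toE X‖ := by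
  rw [EuclideanSpace.norm_eq]
  simp [frobNorm, toE, Fintype.sum_prod_type, Real.norm_eq_abs, sq_abs]

lemma frobNorm_nonneg {N C : ℕ} (X : Matrix (Fin N) (Fin C) ℝ) : 0 ≤ frobNorm X :=
  Real.sqrt_nonneg _

lemma frobNorm_add_le {N C : ℕ} (X Y : Matrix (Fin N) (Fin C) ℝ) :
    frobNorm (X + Y) ≤ frobNorm X + frobNorm Y := by
  have h : toE (X + Y) = toE X + toE Y := rfl
  rw [frobNorm_eq, frobNorm_eq, frobNorm_eq, h]
  exact norm_add_le _ _

lemma frobNorm_smul {N C : ℕ} (c : ℝ) (X : Matrix (Fin N) (Fin C) ℝ) :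
    frobNorm (c • X) = |c| * frobNorm X := by
  have h : toE (c • X) = c • toE X := rfl
  rw [frobNorm_eq, frobNorm_eq, h, norm_smul, Real.norm_eq_abs]

section Spectral
variable {N M : ℕ} (hatA : Matrix (Fin N) (Fin N) ℝ)

lemma isHermitian_of_isSymm (hsymm : hatA.IsSymm) : hatA.IsHermitian := by
  unfold Matrix.IsHermitian
  rw [Matrix.conjTranspose]
  ext i j; simpa using congrFun (congrFun hsymm.eq i) j

lemma euclid_norm_sq (w : EuclideanSpace ℝ (Fin N)) : ‖w‖ ^ 2 = ∑ i, (w i) ^ 2 := by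
  rw [EuclideanSpace.norm_eq, Real.sq_sqrt (by positivity)]
  simp [Real.norm_eq_abs, sq_abs]

lemma key_vec (hsymm : hatA.IsSymm)
    (E : Matrix (Fin N) (Fin M) ℝ)
    (lam : ℝ) (hlam0 : 0 ≤ lam)
    (hEig1 : ∀ v : Fin N → ℝ, hatA.mulVec v = v ↔
      v ∈ Submodule.span ℝ (Set.range fun m => fun i => E i m))
    (hOther : ∀ (μ : ℝ) (v : Fin N → ℝ), v ≠ 0 → hatA.mulVec v = μ • v →
      μ = 1 ∨ |μ| ≤ lam)
    (w : Fin N → ℝ) (hw : Eᵀ.mulVec w = 0) :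
    ∑ i, (hatA.mulVec w i) ^ 2 ≤ lam ^ 2 * ∑ i, (w i) ^ 2 := by
  have hA : hatA.IsHermitian := isHermitian_of_isSymm hatA hsymm
  set b := hA.eigenvectorBasis with hb
  set μ := hA.eigenvalues with hμ
  -- inner products are dot products
  have hinner : ∀ x y : EuclideanSpace ℝ (Fin N), (inner ℝ x y : ℝ) = ∑ i, x i * y i := by
    intro x y; simp [PiLp.inner_apply, RCLike.inner_apply, conj_trivial]
    exact Finset.sum_congr rfl fun i _ => mul_comm _ _
  -- w is orthogonal to the span of columns of E
  have horth : ∀ x : Fin N → ℝ, x ∈ Submodule.span ℝ (Set.range fun m => fun i => E i m) →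
      ∑ k, x k * w k = 0 := by
    intro x hx
    induction hx using Submodule.span_induction with
    | mem x hx =>
        obtain ⟨m, rfl⟩ := hx
        have := congrFun hw m
        simpa [Matrix.mulVec, dotProduct, Matrix.transpose_apply] using this
    | zero => simp
    | add x y _ _ hx hy => simpa [add_mul, Finset.sum_add_distrib] using by rw [hx, hy]; ring
    | smul c x _ hx => simp [smul_eq_mul, mul_assoc, ← Finset.mul_sum, hx]
  have hdot : ∀ i, (dotProduct (⇑(b i)) (hatA.mulVec w)) = μ i * dotProduct (⇑(b i)) w := by
    intro i
    rw [dotProduct_mulVec, ← Matrix.mulVec_transpose, hsymm.eq,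
      hA.mulVec_eigenvectorBasis i, smul_dotProduct]
    rfl
  have key : ∀ x : EuclideanSpace ℝ (Fin N), ∑ i, (x i) ^ 2 = ∑ i, (b.repr x i) ^ 2 := by
    intro x
    have h := congrArg (· ^ 2) (b.repr.norm_map x)
    rw [euclid_norm_sq, euclid_norm_sq] at h
    exact h.symm
  set W : EuclideanSpace ℝ (Fin N) := (WithLp.equiv 2 (Fin N → ℝ)).symm w with hW
  set AW : EuclideanSpace ℝ (Fin N) := (WithLp.equiv 2 (Fin N → ℝ)).symm (hatA.mulVec w) with hAW
  have hrepr : ∀ i, b.repr AW i = μ i * b.repr W i := by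
    intro i
    rw [b.repr_apply_apply, b.repr_apply_apply, hinner, hinner]
    exact hdot i
  have hterm : ∀ i, (b.repr AW i) ^ 2 ≤ lam ^ 2 * (b.repr W i) ^ 2 := by
    intro i
    rw [hrepr i]
    rcases hOther (μ i) (b i) (by simpa using b.orthonormal.ne_zero i) (hA.mulVec_eigenvectorBasis i) with h1 | h2
    · have hmem : (⇑(b i) : Fin N → ℝ) ∈ Submodule.span ℝ (Set.range fun m => fun i => E i m) := by
        rw [← hEig1]
        rw [hA.mulVec_eigenvectorBasis i]
        show μ i • _ = _
        rw [h1, one_smul]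
      have : b.repr W i = 0 := by
        rw [b.repr_apply_apply, hinner]
        exact horth _ hmem
      simp [this]
    · have : μ i ^ 2 ≤ lam ^ 2 := by
        rw [← sq_abs (μ i)]
        exact pow_le_pow_left₀ (abs_nonneg _) h2 2
      calc (μ i * b.repr W i) ^ 2 = μ i ^ 2 * (b.repr W i) ^ 2 := by ring
        _ ≤ lam ^ 2 * (b.repr W i) ^ 2 := mul_le_mul_of_nonneg_right this (sq_nonneg _)
  calc ∑ i, (hatA.mulVec w i) ^ 2 = ∑ i, (b.repr AW i) ^ 2 := key AW
    _ ≤ ∑ i, lam ^ 2 * (b.repr W i) ^ 2 := Finset.sum_le_sum fun i _ => hterm i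
    _ = lam ^ 2 * ∑ i, (b.repr W i) ^ 2 := (Finset.mul_sum _ _ _).symm
    _ = lam ^ 2 * ∑ i, (w i) ^ 2 := by rw [← key W]; rfl

lemma frob_le_of_cols {N C : ℕ} {A B : Matrix (Fin N) (Fin C) ℝ} (c : ℝ) (hc : 0 ≤ c)
    (h : ∀ j, ∑ i, (A i j) ^ 2 ≤ c ^ 2 * ∑ i, (B i j) ^ 2) : frobNorm A ≤ c * frobNorm B := by
  unfold frobNorm
  rw [show (∑ i, ∑ j, (A i j) ^ 2) = ∑ j, ∑ i, (A i j) ^ 2 from Finset.sum_comm]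
  calc Real.sqrt (∑ j, ∑ i, (A i j) ^ 2)
      ≤ Real.sqrt (∑ j, c ^ 2 * ∑ i, (B i j) ^ 2) :=
        Real.sqrt_le_sqrt (Finset.sum_le_sum fun j _ => h j)
    _ = c * Real.sqrt (∑ i, ∑ j, (B i j) ^ 2) := by
        rw [← Finset.mul_sum, Real.sqrt_mul (sq_nonneg c), Real.sqrt_sq hc,
          show (∑ j, ∑ i, (B i j) ^ 2) = ∑ i, ∑ j, (B i j) ^ 2 from Finset.sum_comm]

lemma mul_col {N N' C : ℕ} (A : Matrix (Fin N) (Fin N') ℝ) (W : Matrix (Fin N') (Fin C) ℝ)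
    (i : Fin N) (j : Fin C) : (A * W) i j = A.mulVec (fun k => W k j) i := by
  simp [Matrix.mul_apply, Matrix.mulVec, dotProduct]

lemma key_mat (hsymm : hatA.IsSymm)
    (E : Matrix (Fin N) (Fin M) ℝ)
    (lam : ℝ) (hlam0 : 0 ≤ lam)
    (hEig1 : ∀ v : Fin N → ℝ, hatA.mulVec v = v ↔
      v ∈ Submodule.span ℝ (Set.range fun m => fun i => E i m))
    (hOther : ∀ (μ : ℝ) (v : Fin N → ℝ), v ≠ 0 → hatA.mulVec v = μ • v →
      μ = 1 ∨ |μ| ≤ lam)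
    {C : ℕ} (W : Matrix (Fin N) (Fin C) ℝ) (hW : Eᵀ * W = 0) :
    frobNorm (hatA * W) ≤ lam * frobNorm W := by
  refine frob_le_of_cols lam hlam0 fun j => ?_
  have hw : Eᵀ.mulVec (fun k => W k j) = 0 := by
    funext m
    have := congrFun (congrFun hW m) j
    rw [mul_col] at this
    simpa using this
  simpa [mul_col] using key_vec hatA hsymm E lam hlam0 hEig1 hOther (fun k => W k j) hw

lemma proj_contract {N C : ℕ} (P : Matrix (Fin N) (Fin N) ℝ) (hPsymm : Pᵀ = P)
    (hPP : P * P = P) (X : Matrix (Fin N) (Fin C) ℝ) :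
    frobNorm (X - P * X) ≤ frobNorm X := by
  have h := frob_le_of_cols (A := X - P * X) (B := X) 1 zero_le_one ?_
  · simpa using h
  intro j
  set vv : Fin N → ℝ := fun k => X k j with hvv
  have hcol : ∀ i, (X - P * X) i j = vv i - P.mulVec vv i := by
    intro i; simp [Matrix.sub_apply, mul_col, hvv]
  have hPvPv : dotProduct (P.mulVec vv) (P.mulVec vv) = dotProduct vv (P.mulVec vv) := by
    rw [dotProduct_mulVec, ← Matrix.mulVec_transpose, hPsymm, Matrix.mulVec_mulVec, hPP]
    exact dotProduct_comm _ _
  have hpos : 0 ≤ dotProduct vv (P.mulVec vv) := by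
    rw [← hPvPv]
    exact Finset.sum_nonneg fun i _ => mul_self_nonneg _
  have expand : ∑ i, ((X - P * X) i j) ^ 2
      = ∑ i, (vv i) ^ 2 - dotProduct vv (P.mulVec vv) := by
    simp only [hcol]
    have e1 : ∑ i, (vv i - P.mulVec vv i) ^ 2
        = (∑ i, (vv i) ^ 2) - 2 * dotProduct vv (P.mulVec vv)
          + dotProduct (P.mulVec vv) (P.mulVec vv) := by
      simp only [dotProduct, Finset.mul_sum, ← Finset.sum_add_distrib,
        ← Finset.sum_sub_distrib]
      exact Finset.sum_congr rfl fun i _ => by ring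
    rw [e1, hPvPv]; ring
  rw [expand]
  simp only [one_pow, one_mul]
  linarith

end Spectral


/-- APPNP `H_{l+1} = (1-β) Â H_l + β H_0` converges to the cuboid `O(M, r)`
with `v = (1-β)λ` and `r = β d_M(H_0)/(1-v)`:
`d_M(H_{l+1}) - r ≤ v (d_M(H_l) - r)`, hence
`d_M(H_l) ≤ r + v^l (d_M(H_0) - r)` and `limsup d_M(H_l) ≤ r`. -/
theorem appnp_over_smoothing
    (N M C : ℕ) (hatA : Matrix (Fin N) (Fin N) ℝ) (hsymm : hatA.IsSymm)
    (E : Matrix (Fin N) (Fin M) ℝ) (hortho : Eᵀ * E = 1)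
    (lam : ℝ) (hlam0 : 0 ≤ lam) (hlam1 : lam < 1)
    (hEig1 : ∀ v : Fin N → ℝ, hatA.mulVec v = v ↔
      v ∈ Submodule.span ℝ (Set.range fun m => fun i => E i m))
    (hOther : ∀ (μ : ℝ) (v : Fin N → ℝ), v ≠ 0 → hatA.mulVec v = μ • v →
      μ = 1 ∨ |μ| ≤ lam)
    (β : ℝ) (hβ0 : 0 < β) (hβ1 : β ≤ 1)
    (MS : Set (Matrix (Fin N) (Fin C) ℝ))
    (hMS : MS = {H | ∃ Cm : Matrix (Fin M) (Fin C) ℝ, H = E * Cm})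
    (H : ℕ → Matrix (Fin N) (Fin C) ℝ)
    (hrec : ∀ l, H (l + 1) = (1 - β) • (hatA * H l) + β • H 0)
    (v r : ℝ) (hv : v = (1 - β) * lam)
    (hr : r = β * distTo MS (H 0) / (1 - v)) :
    (∀ l, distTo MS (H (l + 1)) - r ≤ v * (distTo MS (H l) - r)) ∧
    (∀ l, distTo MS (H l) ≤ r + v ^ l * (distTo MS (H 0) - r)) ∧
    limsup (fun l => distTo MS (H l)) atTop ≤ r := by
  have hvnn : 0 ≤ v := by rw [hv]; exact mul_nonneg (by linarith) hlam0
  have hv1 : v < 1 := by rw [hv]; nlinarith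
  have h1v : 0 < 1 - v := by linarith
  -- basic facts about distTo
  have hne : MS.Nonempty := ⟨0, by rw [hMS]; exact ⟨0, (Matrix.mul_zero E).symm⟩⟩
  have himg : ∀ X : Matrix (Fin N) (Fin C) ℝ,
      ((fun Y => frobNorm (X - Y)) '' MS).Nonempty := fun X => hne.image _
  have hbdd : ∀ X : Matrix (Fin N) (Fin C) ℝ,
      BddBelow ((fun Y => frobNorm (X - Y)) '' MS) := fun X =>
    ⟨0, by rintro z ⟨Y, _, rfl⟩; exact frobNorm_nonneg _⟩
  have dle : ∀ X Y, Y ∈ MS → distTo MS X ≤ frobNorm (X - Y) := fun X Y hY =>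
    csInf_le (hbdd X) ⟨Y, hY, rfl⟩
  have dnn : ∀ X, 0 ≤ distTo MS X := fun X =>
    le_csInf (himg X) (by rintro z ⟨Y, _, rfl⟩; exact frobNorm_nonneg _)
  -- hatA fixes columns of E
  have hAE : hatA * E = E := by
    ext i m
    rw [mul_col]
    have h := (hEig1 (fun k => E k m)).2 (Submodule.subset_span ⟨m, rfl⟩)
    exact congrFun h i
  set P : Matrix (Fin N) (Fin N) ℝ := E * Eᵀ with hP
  have hPsymm : Pᵀ = P := by rw [hP, Matrix.transpose_mul, Matrix.transpose_transpose]
  have hPP : P * P = P := by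
    rw [hP, Matrix.mul_assoc E Eᵀ (E * Eᵀ), ← Matrix.mul_assoc Eᵀ E Eᵀ, hortho, Matrix.one_mul]
  -- contraction property
  have dcontr : ∀ X, distTo MS (hatA * X) ≤ lam * distTo MS X := by
    intro X
    have step : ∀ Y ∈ MS, distTo MS (hatA * X) ≤ lam * frobNorm (X - Y) := by
      intro Y hY
      rw [hMS] at hY
      obtain ⟨Cm, rfl⟩ := hY
      set R : Matrix (Fin N) (Fin C) ℝ := (X - E * Cm) - P * (X - E * Cm) with hR
      have hYmem : E * Cm + P * (X - E * Cm) ∈ MS := by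
        rw [hMS]
        exact ⟨Cm + Eᵀ * (X - E * Cm), by rw [Matrix.mul_add, hP, Matrix.mul_assoc]⟩
      have hid : hatA * X - (E * Cm + P * (X - E * Cm)) = hatA * R := by
        rw [hR, hP]
        simp only [Matrix.mul_sub, Matrix.mul_add, ← Matrix.mul_assoc, hAE]
        abel
      have hER : Eᵀ * R = 0 := by
        rw [hR, hP]
        simp only [Matrix.mul_sub, ← Matrix.mul_assoc, hortho, Matrix.one_mul]
        abel
      calc distTo MS (hatA * X)
          ≤ frobNorm (hatA * X - (E * Cm + P * (X - E * Cm))) := dle _ _ hYmem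
        _ = frobNorm (hatA * R) := by rw [hid]
        _ ≤ lam * frobNorm R := key_mat hatA hsymm E lam hlam0 hEig1 hOther R hER
        _ ≤ lam * frobNorm (X - E * Cm) :=
            mul_le_mul_of_nonneg_left (proj_contract P hPsymm hPP (X - E * Cm)) hlam0
    have hrw : lam * distTo MS X
        = sInf (lam • ((fun Y => frobNorm (X - Y)) '' MS)) := by
      rw [Real.sInf_smul_of_nonneg hlam0]; rfl
    rw [hrw]
    apply le_csInf ((himg X).smul_set)
    rintro z ⟨a, ⟨Y, hY, rfl⟩, rfl⟩
    exact step Y hY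
  -- convexity property
  have dconv : ∀ A B : Matrix (Fin N) (Fin C) ℝ,
      distTo MS ((1 - β) • A + β • B) ≤ (1 - β) * distTo MS A + β * distTo MS B := by
    intro A B
    apply le_of_forall_pos_le_add
    intro ε hε
    obtain ⟨a, ⟨Y1, hY1, rfl⟩, ha⟩ := Real.lt_sInf_add_pos (himg A) hε
    obtain ⟨b2, ⟨Y2, hY2, rfl⟩, hb⟩ := Real.lt_sInf_add_pos (himg B) hε
    have ha' : frobNorm (A - Y1) < distTo MS A + ε := ha
    have hb' : frobNorm (B - Y2) < distTo MS B + ε := hb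
    have hmem : (1 - β) • Y1 + β • Y2 ∈ MS := by
      rw [hMS] at hY1 hY2 ⊢
      obtain ⟨C1, rfl⟩ := hY1
      obtain ⟨C2, rfl⟩ := hY2
      exact ⟨(1 - β) • C1 + β • C2, by rw [Matrix.mul_add, Matrix.mul_smul, Matrix.mul_smul]⟩
    have hsplit : (1 - β) • A + β • B - ((1 - β) • Y1 + β • Y2)
        = (1 - β) • (A - Y1) + β • (B - Y2) := by
      simp only [smul_sub]; abel
    calc distTo MS ((1 - β) • A + β • B)
        ≤ frobNorm ((1 - β) • A + β • B - ((1 - β) • Y1 + β • Y2)) := dle _ _ hmem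
      _ = frobNorm ((1 - β) • (A - Y1) + β • (B - Y2)) := by rw [hsplit]
      _ ≤ frobNorm ((1 - β) • (A - Y1)) + frobNorm (β • (B - Y2)) := frobNorm_add_le _ _
      _ = (1 - β) * frobNorm (A - Y1) + β * frobNorm (B - Y2) := by
          rw [frobNorm_smul, frobNorm_smul, abs_of_nonneg (by linarith : (0:ℝ) ≤ 1 - β),
            abs_of_nonneg hβ0.le]
      _ ≤ (1 - β) * (distTo MS A + ε) + β * (distTo MS B + ε) :=
          add_le_add (mul_le_mul_of_nonneg_left ha'.le (by linarith))
            (mul_le_mul_of_nonneg_left hb'.le hβ0.le)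
      _ = (1 - β) * distTo MS A + β * distTo MS B + ε := by ring
  -- the recursion
  have hβd0 : β * distTo MS (H 0) = r - r * v := by
    rw [hr]; field_simp
  have main : ∀ l, distTo MS (H (l + 1)) - r ≤ v * (distTo MS (H l) - r) := by
    intro l
    have h1 : distTo MS (H (l + 1)) ≤ v * distTo MS (H l) + β * distTo MS (H 0) := by
      rw [hrec l]
      calc distTo MS ((1 - β) • (hatA * H l) + β • H 0)
          ≤ (1 - β) * distTo MS (hatA * H l) + β * distTo MS (H 0) := dconv _ _
        _ ≤ (1 - β) * (lam * distTo MS (H l)) + β * distTo MS (H 0) := by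
            have := mul_le_mul_of_nonneg_left (dcontr (H l)) (show (0:ℝ) ≤ 1 - β by linarith)
            linarith
        _ = v * distTo MS (H l) + β * distTo MS (H 0) := by rw [hv]; ring
    have hexp : v * (distTo MS (H l) - r) = v * distTo MS (H l) - r * v := by ring
    rw [hexp]
    linarith
  have bound : ∀ l, distTo MS (H l) ≤ r + v ^ l * (distTo MS (H 0) - r) := by
    intro l
    induction l with
    | zero => simp
    | succ l ih =>
      have h2 := main l
      have h3 : distTo MS (H l) - r ≤ v ^ l * (distTo MS (H 0) - r) := by linarith
      have h4 := mul_le_mul_of_nonneg_left h3 hvnn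
      calc distTo MS (H (l + 1)) ≤ r + v * (distTo MS (H l) - r) := by linarith
        _ ≤ r + v * (v ^ l * (distTo MS (H 0) - r)) := by linarith
        _ = r + v ^ (l + 1) * (distTo MS (H 0) - r) := by ring
  refine ⟨main, bound, ?_⟩
  have htend : Tendsto (fun l : ℕ => r + v ^ l * (distTo MS (H 0) - r)) atTop (nhds r) := by
    have h0 : Tendsto (fun l : ℕ => v ^ l) atTop (nhds 0) :=
      tendsto_pow_atTop_nhds_zero_of_lt_one hvnn hv1
    have := (h0.mul_const (distTo MS (H 0) - r)).const_add r
    simpa using this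
  have hle : limsup (fun l => distTo MS (H l)) atTop
      ≤ limsup (fun l : ℕ => r + v ^ l * (distTo MS (H 0) - r)) atTop := by
    exact limsup_le_limsup (Filter.Eventually.of_forall bound)
      (Filter.IsBoundedUnder.isCoboundedUnder_le
        (Filter.isBoundedUnder_of ⟨(0:ℝ), fun l : ℕ => dnn (H l)⟩))
      htend.isBoundedUnder_le
  rw [htend.limsup_eq] at hle
  exact hle
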